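/- (Chain estimate) Let w : Ω_b → (0,∞) be continuous on a cone Ω_b, and suppose there is C > 0 such that (1/rⁿ)∫_{B_{2r}(x)} w dx ≤ C·min_{closure B_r(x)} w for all balls with B_{2r}(x) ⊂ Ω_b (weak Harnack with uniform constant). Let B_{r_k}(y_k) be the chain of balls from the cone ball chain with B_{r_k/3}(y_k) ⊂ B_{2r_{k+1}/3}(y_{k+1}). Then min_{closure B_{r_k/3}(y_k)} w ≥ L^k · min_{closure B_{r_0/3}(y_0)} w for all k ∈ ℕ, where L = ω_n/(C·3ⁿ) and ω_n is the volume of the unit ball in ℝⁿ. -/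

import Mathlib

open Set Metric MeasureTheory

theorem stmt17 {n : ℕ} (Ωb : Set (EuclideanSpace ℝ (Fin n)))
    (w : EuclideanSpace ℝ (Fin n) → ℝ)
    (hw : ContinuousOn w Ωb) (hwpos : ∀ x ∈ Ωb, 0 < w x)
    (C : ℝ) (hC : 0 < C)
    -- weak Harnack inequality with a constant uniform over all admissible balls
    (harnack : ∀ (x : EuclideanSpace ℝ (Fin n)) (r : ℝ), 0 < r →
      Metric.closedBall x (2 * r) ⊆ Ωb →
      (1 / r ^ n) * ∫ z in Metric.ball x (2 * r), w z ≤
        C * sInf (w '' Metric.closedBall x r))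
    -- the chain of balls from the cone ball chain
    (y : ℕ → EuclideanSpace ℝ (Fin n)) (r : ℕ → ℝ)
    (hrpos : ∀ k, 0 < r k) (hrmono : ∀ k, r (k + 1) ≤ r k)
    (hball : ∀ k, Metric.closedBall (y k) (2 * r k) ⊆ Ωb)
    (hnest : ∀ k, Metric.ball (y k) (r k / 3) ⊆
      Metric.ball (y (k + 1)) (2 * r (k + 1) / 3))
    (L : ℝ)
    (hL : L = (MeasureTheory.volume
        (Metric.ball (0 : EuclideanSpace ℝ (Fin n)) 1)).toReal / (C * 3 ^ n)) :
    ∀ k : ℕ,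
      L ^ k * sInf (w '' Metric.closedBall (y 0) (r 0 / 3)) ≤
        sInf (w '' Metric.closedBall (y k) (r k / 3)) := by
  set ω : ℝ := (MeasureTheory.volume
      (Metric.ball (0 : EuclideanSpace ℝ (Fin n)) 1)).toReal with hω
  have hωnn : 0 ≤ ω := ENNReal.toReal_nonneg
  have hLnn : 0 ≤ L := by
    rw [hL]; positivity
  -- subsets of Ωb
  have hsub : ∀ k, Metric.closedBall (y k) (r k / 3) ⊆ Ωb := fun k =>
    (closedBall_subset_closedBall (by nlinarith [hrpos k])).trans (hball k)
  have hsub' : ∀ k, Metric.closedBall (y k) (2 * r k / 3) ⊆ Ωb := fun k =>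
    (closedBall_subset_closedBall (by nlinarith [hrpos k])).trans (hball k)
  -- nonnegativity of the infima
  have hm_nn : ∀ k, 0 ≤ sInf (w '' Metric.closedBall (y k) (r k / 3)) := by
    intro k
    apply Real.sInf_nonneg
    rintro a ⟨x, hx, rfl⟩
    exact (hwpos x (hsub k hx)).le
  -- key step
  have key : ∀ k, L * sInf (w '' Metric.closedBall (y k) (r k / 3)) ≤
      sInf (w '' Metric.closedBall (y (k + 1)) (r (k + 1) / 3)) := by
    intro k
    set m := sInf (w '' Metric.closedBall (y k) (r k / 3)) with hm
    set m' := sInf (w '' Metric.closedBall (y (k + 1)) (r (k + 1) / 3)) with hm'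
    have hrk := hrpos k
    have hrk1 := hrpos (k + 1)
    -- integrability on the big closed ball
    have hint : IntegrableOn w (Metric.closedBall (y (k + 1)) (2 * r (k + 1) / 3)) volume :=
      (hw.mono (hsub' (k + 1))).integrableOn_compact (isCompact_closedBall _ _)
    have hint2 : IntegrableOn w (Metric.ball (y (k + 1)) (2 * r (k + 1) / 3)) volume :=
      hint.mono_set ball_subset_closedBall
    -- Step A : m * vol(small ball) ≤ ∫ over small ball
    have hbdd : BddBelow (w '' Metric.closedBall (y k) (r k / 3)) :=
      (isCompact_closedBall _ _).bddBelow_image (hw.mono (hsub k))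
    have hA : m * (volume (Metric.ball (y k) (r k / 3))).toReal ≤
        ∫ z in Metric.ball (y k) (r k / 3), w z := by
      apply setIntegral_ge_of_const_le_real measurableSet_ball
        (measure_ball_lt_top).ne
      · intro x hx
        exact csInf_le hbdd ⟨x, ball_subset_closedBall hx, rfl⟩
      · exact (hint.mono_set ((hnest k).trans ball_subset_closedBall))
    -- Step B : monotonicity of the integral
    have hB : ∫ z in Metric.ball (y k) (r k / 3), w z ≤
        ∫ z in Metric.ball (y (k + 1)) (2 * r (k + 1) / 3), w z := by
      apply setIntegral_mono_set hint2
      · filter_upwards [ae_restrict_mem measurableSet_ball] with x hx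
        exact (hwpos x (hsub' (k + 1) (ball_subset_closedBall hx))).le
      · exact HasSubset.Subset.eventuallyLE (hnest k)
    -- Step C : Harnack on the big ball
    have hC3 : (0:ℝ) < r (k + 1) / 3 := by linarith
    have hCball : Metric.closedBall (y (k + 1)) (2 * (r (k + 1) / 3)) ⊆ Ωb := by
      rw [← mul_div_assoc]; exact hsub' (k + 1)
    have hHar := harnack (y (k + 1)) (r (k + 1) / 3) hC3 hCball
    rw [show (2 : ℝ) * (r (k + 1) / 3) = 2 * r (k + 1) / 3 by ring] at hHar
    -- volume of the small ball
    have hvol : (volume (Metric.ball (y k) (r k / 3))).toReal = (r k / 3) ^ n * ω := by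
      rw [Measure.addHaar_ball_of_pos volume (y k) (by linarith : (0:ℝ) < r k / 3)]
      rw [ENNReal.toReal_mul, ENNReal.toReal_ofReal (by positivity), finrank_euclideanSpace_fin]
    -- combine
    have hpow : (r (k + 1) / 3) ^ n ≤ (r k / 3) ^ n := by
      apply pow_le_pow_left₀ (by linarith) (by linarith [hrmono k])
    have hpowpos : (0:ℝ) < (r (k + 1) / 3) ^ n := by positivity
    have hmnn : 0 ≤ m := hm_nn k
    have hstep : m * ((r k / 3) ^ n * ω) ≤ C * (r (k + 1) / 3) ^ n * m' := by
      rw [← hvol]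
      calc m * (volume (Metric.ball (y k) (r k / 3))).toReal
          ≤ ∫ z in Metric.ball (y (k + 1)) (2 * r (k + 1) / 3), w z := hA.trans hB
        _ ≤ C * (r (k + 1) / 3) ^ n * m' := by
            have := hHar
            rw [div_mul_eq_mul_div, one_mul, div_le_iff₀ hpowpos] at this
            linarith [this]
    -- from hstep deduce m * ω ≤ C * m'
    have hmain : m * ω ≤ C * m' := by
      have h1 : m * ((r (k + 1) / 3) ^ n * ω) ≤ m * ((r k / 3) ^ n * ω) := by
        apply mul_le_mul_of_nonneg_left (mul_le_mul_of_nonneg_right hpow hωnn) hmnn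
      have h2 : m * ((r (k + 1) / 3) ^ n * ω) ≤ C * (r (k + 1) / 3) ^ n * m' :=
        h1.trans hstep
      nlinarith [h2, hpowpos]
    -- conclude L * m ≤ m'
    have h3 : (1:ℝ) ≤ 3 ^ n := one_le_pow₀ (by norm_num)
    have hm'nn : 0 ≤ m' := hm_nn (k + 1)
    rw [hL]
    rw [div_mul_eq_mul_div, div_le_iff₀ (by positivity)]
    calc ω * m ≤ C * m' := by linarith [hmain]
      _ ≤ m' * (C * 3 ^ n) := by nlinarith [mul_nonneg (mul_nonneg hC.le hm'nn) (sub_nonneg.2 h3)]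
  -- induction
  intro k
  induction k with
  | zero => simp
  | succ k ih =>
    calc L ^ (k + 1) * sInf (w '' Metric.closedBall (y 0) (r 0 / 3))
        = L * (L ^ k * sInf (w '' Metric.closedBall (y 0) (r 0 / 3))) := by ring
      _ ≤ L * sInf (w '' Metric.closedBall (y k) (r k / 3)) :=
          mul_le_mul_of_nonneg_left ih hLnn
      _ ≤ _ := key k
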